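/- Let V_{[1,1,1,1]}(x) = a₁/x₁² + a₂/x₂² + a₃/x₃² + a₄/x₄² with the ε-dependent parameters a₁ = −(1/2)(b₁/ε² + b₂/(2ε⁴)), a₂ = −b₂/(4ε⁴), a₃ = b₃, a₄ = b₄, and let x(ε) be given by x₁ + ix₂ = (i√2/ε)(x₁'+ix₂') + (iε/√2)(x₁'−ix₂'), x₁ − ix₂ = −(iε/√2)(x₁'−ix₂'), x₃ = x₃', x₄ = x₄'. Then, for fixed x' with (x₁'+ix₂')·x₃'·x₄' ≠ 0, the limit as ε → 0 of V_{[1,1,1,1]}(x(ε)) equals V_{[2,1,1]}(x') = b₁/(x₁'+ix₂')² + b₂(x₁'−ix₂')/(x₁'+ix₂')³ + b₃/x₃'² + b₄/x₄'². -/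

import Mathlib

open Complex Filter Topology

lemma bocher_aux1 (u v ε s : ℂ) (hε : ε ≠ 0) (hs0 : s ≠ 0) (hs2 : s ^ 2 = 2) :
    (((I * s / ε) * u + (I * ε / s) * v + -(I * ε / s) * v) / 2) ^ 2
      = -(u ^ 2) / (2 * ε ^ 2) := by
  have h : ((I * s / ε) * u + (I * ε / s) * v + -(I * ε / s) * v) = I * (s / ε * u) := by
    ring
  rw [h, div_pow, mul_pow, Complex.I_sq]
  field_simp
  linear_combination (-u ^ 2) * hs2

lemma bocher_aux2 (u v ε s : ℂ) (hε : ε ≠ 0) (hs0 : s ≠ 0) (hs2 : s ^ 2 = 2) :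
    (((I * s / ε) * u + (I * ε / s) * v - -(I * ε / s) * v) / (2 * I)) ^ 2
      = (u + ε ^ 2 * v) ^ 2 / (2 * ε ^ 2) := by
  have h : ((I * s / ε) * u + (I * ε / s) * v - -(I * ε / s) * v)
      = I * (s / ε * u + 2 * ε / s * v) := by ring
  have h2 : (2 * I : ℂ) = I * 2 := by ring
  rw [h, h2, mul_div_mul_left _ _ Complex.I_ne_zero]
  field_simp
  linear_combination (s^2*u^2 - 2*ε^4*v^2) * hs2

lemma bocher_key (b1 b2 b3 b4 u v x3 x4 ε s : ℂ) (hε : ε ≠ 0) (hu : u ≠ 0)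
    (huv : u + ε ^ 2 * v ≠ 0) (hs0 : s ≠ 0) (hs2 : s ^ 2 = 2) :
    (-(1 / 2 : ℂ) * (b1 / ε ^ 2 + b2 / (2 * ε ^ 4))) /
        ((((I * s / ε) * u + (I * ε / s) * v + -(I * ε / s) * v) / 2) ^ 2) +
      (-b2 / (4 * ε ^ 4)) /
        ((((I * s / ε) * u + (I * ε / s) * v - -(I * ε / s) * v) / (2 * I)) ^ 2) +
      b3 / x3 ^ 2 + b4 / x4 ^ 2
    = b1 / u ^ 2 + b2 * (2 * u * v + ε ^ 2 * v ^ 2) / (2 * u ^ 2 * (u + ε ^ 2 * v) ^ 2) +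
      b3 / x3 ^ 2 + b4 / x4 ^ 2 := by
  rw [bocher_aux1 u v ε s hε hs0 hs2, bocher_aux2 u v ε s hε hs0 hs2]
  have t1 : (-(1 / 2 : ℂ) * (b1 / ε ^ 2 + b2 / (2 * ε ^ 4))) / (-(u ^ 2) / (2 * ε ^ 2))
      = b1 / u ^ 2 + b2 / (2 * ε ^ 2 * u ^ 2) := by
    field_simp
  have t2 : (-b2 / (4 * ε ^ 4)) / ((u + ε ^ 2 * v) ^ 2 / (2 * ε ^ 2))
      = -b2 / (2 * ε ^ 2 * (u + ε ^ 2 * v) ^ 2) := by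
    field_simp
    ring
  rw [t1, t2]
  have t3 : b2 / (2 * ε ^ 2 * u ^ 2) + -b2 / (2 * ε ^ 2 * (u + ε ^ 2 * v) ^ 2)
      = b2 * (2 * u * v + ε ^ 2 * v ^ 2) / (2 * u ^ 2 * (u + ε ^ 2 * v) ^ 2) := by
    rw [div_add_div _ _ (by simp [hε, hu]) (by simp [hε, huv]),
      div_eq_div_iff (by simp [hε, hu, huv]) (by simp [hu, huv])]
    ring
  linear_combination t3

/-- The Bôcher contraction `[1,1,1,1] → [2,1,1]` of the generic potential:
with `a₁ = −(1/2)(b₁/ε² + b₂/(2ε⁴))`, `a₂ = −b₂/(4ε⁴)`, `a₃ = b₃`, `a₄ = b₄`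
and the contracted coordinates `x(ε)` determined by
`x₁+ix₂ = (i√2/ε)(x₁'+ix₂') + (iε/√2)(x₁'−ix₂')`, `x₁−ix₂ = −(iε/√2)(x₁'−ix₂')`,
`x₃ = x₃'`, `x₄ = x₄'`, the potential `V_{[1,1,1,1]}(x(ε))` tends, as `ε → 0`,
to `V_{[2,1,1]}(x') = b₁/(x₁'+ix₂')² + b₂(x₁'−ix₂')/(x₁'+ix₂')³ + b₃/x₃'² + b₄/x₄'²`. -/
theorem stmt13 (b1 b2 b3 b4 : ℂ) (x1' x2' x3' x4' : ℂ)
    (h12 : x1' + I * x2' ≠ 0) (h3 : x3' ≠ 0) (h4 : x4' ≠ 0) :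
    Tendsto
      (fun ε : ℂ =>
        let A := (I * (Real.sqrt 2 : ℂ) / ε) * (x1' + I * x2') +
          (I * ε / (Real.sqrt 2 : ℂ)) * (x1' - I * x2')
        let B := -(I * ε / (Real.sqrt 2 : ℂ)) * (x1' - I * x2')
        let x1 := (A + B) / 2
        let x2 := (A - B) / (2 * I)
        let a1 := -(1 / 2 : ℂ) * (b1 / ε ^ 2 + b2 / (2 * ε ^ 4))
        let a2 := -b2 / (4 * ε ^ 4)
        a1 / x1 ^ 2 + a2 / x2 ^ 2 + b3 / x3' ^ 2 + b4 / x4' ^ 2)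
      (𝓝[≠] (0 : ℂ))
      (𝓝 (b1 / (x1' + I * x2') ^ 2 + b2 * (x1' - I * x2') / (x1' + I * x2') ^ 3 +
        b3 / x3' ^ 2 + b4 / x4' ^ 2)) := by
  set u := x1' + I * x2' with hu
  set v := x1' - I * x2' with hv
  clear_value u v
  have hs2 : ((Real.sqrt 2 : ℝ) : ℂ) ^ 2 = 2 := by
    norm_cast
    rw [Real.sq_sqrt] <;> norm_num
  have hs0 : ((Real.sqrt 2 : ℝ) : ℂ) ≠ 0 := by
    intro h
    rw [h] at hs2; norm_num at hs2
  set g : ℂ → ℂ := fun ε =>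
    b1 / u ^ 2 + b2 * (2 * u * v + ε ^ 2 * v ^ 2) / (2 * u ^ 2 * (u + ε ^ 2 * v) ^ 2) +
      b3 / x3' ^ 2 + b4 / x4' ^ 2 with hg
  have hcont : ContinuousAt g 0 := by
    apply ContinuousAt.add
    apply ContinuousAt.add
    apply ContinuousAt.add continuousAt_const
    · apply ContinuousAt.div (by fun_prop) (by fun_prop)
      simp [h12]
    · exact continuousAt_const
    · exact continuousAt_const
  have hg0 : g 0 = b1 / u ^ 2 + b2 * v / u ^ 3 + b3 / x3' ^ 2 + b4 / x4' ^ 2 := by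
    have hb : b2 * (2 * u * v + 0 ^ 2 * v ^ 2) / (2 * u ^ 2 * (u + 0 ^ 2 * v) ^ 2)
        = b2 * v / u ^ 3 := by
      norm_num
      rw [div_eq_div_iff (by simp [h12]) (by simp [h12])]
      ring
    rw [hg]
    simp only
    rw [hb]
  have hglim : Tendsto g (𝓝[≠] (0 : ℂ)) (𝓝 (b1 / u ^ 2 + b2 * v / u ^ 3 +
      b3 / x3' ^ 2 + b4 / x4' ^ 2)) := by
    rw [← hg0]
    exact hcont.continuousWithinAt.tendsto
  refine Tendsto.congr' ?_ hglim
  have hne : ∀ᶠ ε in 𝓝 (0 : ℂ), u + ε ^ 2 * v ≠ 0 := by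
    have hc : ContinuousAt (fun ε : ℂ => u + ε ^ 2 * v) 0 := by fun_prop
    have := hc.eventually_ne (by simpa using h12)
    simpa using this
  filter_upwards [self_mem_nhdsWithin, eventually_nhdsWithin_of_eventually_nhds hne]
    with ε hε hne'
  exact (bocher_key b1 b2 b3 b4 u v x3' x4' ε ((Real.sqrt 2 : ℝ) : ℂ) hε h12 hne'
    hs0 hs2).symm
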